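/- Let {y_k}, {a_k}, {b_k} be sequences of nonnegative random variables adapted to a filtration {F_k} such that almost surely a_k ∈ [0,1], Σ a_k = ∞, Σ b_k < ∞, lim_{k→∞} b_k / a_k = 0, and E[y_{k+1} | F_k] ≤ (1 − a_k) y_k + b_k for all k. Then almost surely y_k converges to zero. -/

import Mathlib

open MeasureTheory Filter

open scoped Classical in
/-- The stopped process `V` used in the proof of Polyak's theorem:
`V 0 = y 0 + h 0`, and `V (k+1) = y (k+1) + h (k+1)` as long as we are still in the
"continuation region" `D k`, frozen afterwards. -/
noncomputable def polyakStopped {Ω : Type*} (y h : ℕ → Ω → ℝ) (D : ℕ → Set Ω) : ℕ → Ω → ℝ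
  | 0 => fun ω => y 0 ω + h 0 ω
  | (k + 1) => fun ω =>
      if ω ∈ D k then y (k + 1) ω + h (k + 1) ω else polyakStopped y h D k ω

lemma polyakStopped_zero {Ω : Type*} (y h : ℕ → Ω → ℝ) (D : ℕ → Set Ω) (ω : Ω) :
    polyakStopped y h D 0 ω = y 0 ω + h 0 ω := rfl

lemma polyakStopped_pos {Ω : Type*} (y h : ℕ → Ω → ℝ) (D : ℕ → Set Ω) {k : ℕ} {ω : Ω}
    (hm : ω ∈ D k) :
    polyakStopped y h D (k + 1) ω = y (k + 1) ω + h (k + 1) ω := by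
  simp [polyakStopped, hm]

lemma polyakStopped_neg {Ω : Type*} (y h : ℕ → Ω → ℝ) (D : ℕ → Set Ω) {k : ℕ} {ω : Ω}
    (hm : ω ∉ D k) :
    polyakStopped y h D (k + 1) ω = polyakStopped y h D k ω := by
  simp [polyakStopped, hm]

lemma polyak_core {Ω : Type*} {m : MeasurableSpace Ω} {μ : Measure Ω} [IsProbabilityMeasure μ]
    (ℱ : Filtration ℕ m) (y h : ℕ → Ω → ℝ) (D : ℕ → Set Ω)
    (hy_adapted : Adapted ℱ y) (hy_int : ∀ k, Integrable (y k) μ)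
    (hh0 : StronglyMeasurable[ℱ 0] (h 0)) (hh0i : Integrable (h 0) μ)
    (hh : ∀ k, StronglyMeasurable[ℱ k] (h (k + 1)))
    (hD : ∀ k, MeasurableSet[ℱ k] (D k)) (hDmono : ∀ k, D (k + 1) ⊆ D k)
    (hhi : ∀ k, Integrable ((D k).indicator (h (k + 1))) μ)
    (hsup : ∀ k, ∀ᵐ ω ∂μ, ω ∈ D k → (μ[y (k + 1)|ℱ k]) ω + h (k + 1) ω ≤ y k ω + h k ω)
    (h0nonneg : ∀ᵐ ω ∂μ, 0 ≤ y 0 ω + h 0 ω)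
    (hnonneg : ∀ k, ∀ᵐ ω ∂μ, ω ∈ D k → 0 ≤ y (k + 1) ω + h (k + 1) ω) :
    ∀ᵐ ω ∂μ, ∃ c, Tendsto (fun k => polyakStopped y h D k ω) atTop (nhds c) := by
  set V := polyakStopped y h D with hV
  -- value on the continuation region
  have hVD : ∀ k ω, ω ∈ D k → V k ω = y k ω + h k ω := by
    intro k ω hm
    cases k with
    | zero => rfl
    | succ k => exact polyakStopped_pos y h D (hDmono k hm)
  -- representation of `V (k+1)` as a sum of indicators
  have hrep : ∀ k, V (k + 1) =
      (D k).indicator (y (k + 1)) +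
        ((D k).indicator (h (k + 1)) + (D k)ᶜ.indicator (V k)) := by
    intro k
    funext ω
    by_cases hm : ω ∈ D k
    · rw [show V (k+1) ω = _ from polyakStopped_pos y h D hm]
      simp [Set.indicator_of_mem hm, Set.indicator_of_notMem (by simpa using hm : ω ∉ (D k)ᶜ)]
    · rw [show V (k+1) ω = V k ω from polyakStopped_neg y h D hm]
      simp [Set.indicator_of_notMem hm, Set.indicator_of_mem (by simpa using hm : ω ∈ (D k)ᶜ)]
  -- adaptedness
  have hVadp : ∀ k, StronglyMeasurable[ℱ k] (V k) := by
    intro k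
    induction k with
    | zero => exact (hy_adapted 0).stronglyMeasurable.add hh0
    | succ k ih =>
        rw [hrep k]
        have hDk : MeasurableSet[ℱ (k + 1)] (D k) := ℱ.mono k.le_succ _ (hD k)
        exact ((hy_adapted (k + 1)).stronglyMeasurable.indicator hDk).add
          ((((hh k).mono (ℱ.mono k.le_succ)).indicator hDk).add
            ((ih.mono (ℱ.mono k.le_succ)).indicator hDk.compl))
  -- integrability
  have hVint : ∀ k, Integrable (V k) μ := by
    intro k
    induction k with
    | zero => exact (hy_int 0).add hh0i
    | succ k ih =>
        rw [hrep k]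
        exact (((hy_int (k + 1)).indicator (ℱ.le k _ (hD k)))).add
          ((hhi k).add (ih.indicator (ℱ.le k _ (hD k)).compl))
  -- supermartingale property
  have hsupV : ∀ k, μ[V (k + 1)|ℱ k] ≤ᵐ[μ] V k := by
    intro k
    set g := (D k).indicator (h (k + 1)) + (D k)ᶜ.indicator (V k) with hg
    have hg_meas : StronglyMeasurable[ℱ k] g :=
      ((hh k).indicator (hD k)).add ((hVadp k).indicator (hD k).compl)
    have hg_int : Integrable g μ :=
      (hhi k).add ((hVint k).indicator (ℱ.le k _ (hD k)).compl)
    have h1 : μ[V (k + 1)|ℱ k] =ᵐ[μ] μ[(D k).indicator (y (k + 1))|ℱ k] + μ[g|ℱ k] := by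
      rw [hrep k]
      exact condExp_add ((hy_int (k + 1)).indicator (ℱ.le k _ (hD k))) hg_int _
    have h2 : μ[(D k).indicator (y (k + 1))|ℱ k] =ᵐ[μ] (D k).indicator (μ[y (k + 1)|ℱ k]) :=
      condExp_indicator (hy_int (k + 1)) (hD k)
    have h3 : μ[g|ℱ k] = g := condExp_of_stronglyMeasurable (ℱ.le k) hg_meas hg_int
    filter_upwards [h1, h2, hsup k] with ω hω1 hω2 hω3
    rw [Pi.add_apply, hω2, h3] at hω1
    by_cases hm : ω ∈ D k
    · rw [hω1, hVD k ω hm]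
      simp only [hg, Pi.add_apply, Set.indicator_of_mem hm,
        Set.indicator_of_notMem (by simpa using hm : ω ∉ (D k)ᶜ), add_zero]
      exact hω3 hm
    · rw [hω1]
      simp [hg, Set.indicator_of_notMem hm,
        Set.indicator_of_mem (by simpa using hm : ω ∈ (D k)ᶜ)]
  have hVsuper : Supermartingale V ℱ μ := supermartingale_nat hVadp hVint hsupV
  -- nonnegativity
  have hVpos : ∀ᵐ ω ∂μ, ∀ k, 0 ≤ V k ω := by
    filter_upwards [h0nonneg, ae_all_iff.2 hnonneg] with ω h0 hk
    intro k
    induction k with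
    | zero => exact h0
    | succ k ih =>
        by_cases hm : ω ∈ D k
        · rw [show V (k+1) ω = _ from polyakStopped_pos y h D hm]; exact hk k hm
        · rw [show V (k+1) ω = V k ω from polyakStopped_neg y h D hm]; exact ih
  -- uniform L¹ bound
  have hint_le : ∀ k, ∫ ω, V k ω ∂μ ≤ ∫ ω, V 0 ω ∂μ := by
    intro k
    have := hVsuper.setIntegral_le (Nat.zero_le k)
      (MeasurableSet.univ : MeasurableSet[ℱ 0] Set.univ)
    simpa [setIntegral_univ] using this
  have hkey : ∀ k, eLpNorm (V k) 1 μ = ENNReal.ofReal (∫ ω, V k ω ∂μ) := by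
    intro k
    have hpos : 0 ≤ᵐ[μ] V k := hVpos.mono fun ω hω => hω k
    rw [eLpNorm_one_eq_lintegral_enorm,
      ofReal_integral_eq_lintegral_ofReal (hVint k) hpos]
    refine lintegral_congr_ae ?_
    filter_upwards [hpos] with ω hω
    exact Real.enorm_eq_ofReal hω
  have hbdd : ∀ k, eLpNorm ((-V) k) 1 μ ≤ (∫ ω, V 0 ω ∂μ).toNNReal := by
    intro k
    have h1 : eLpNorm ((-V) k) 1 μ = eLpNorm (V k) 1 μ := eLpNorm_neg (V k) 1 μ
    rw [h1, hkey k]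
    exact ENNReal.ofReal_le_ofReal (hint_le k)
  have hconv := hVsuper.neg.exists_ae_tendsto_of_bdd hbdd
  filter_upwards [hconv] with ω hc
  obtain ⟨c, hc⟩ := hc
  refine ⟨-c, ?_⟩
  have := hc.neg
  simpa using this

section
variable {Ω : Type*} {m : MeasurableSpace Ω} {μ : Measure Ω} [IsProbabilityMeasure μ]
  (ℱ : Filtration ℕ m) (y a b : ℕ → Ω → ℝ)

lemma polyak_conv1
    (hy_adapted : Adapted ℱ y) (hb_adapted : Adapted ℱ b)
    (hy_int : ∀ k, Integrable (y k) μ)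
    (hy_nonneg : ∀ k, 0 ≤ᵐ[μ] y k) (hb_nonneg : ∀ k, 0 ≤ᵐ[μ] b k)
    (ha_mem : ∀ k, ∀ᵐ ω ∂μ, a k ω ∈ Set.Icc (0 : ℝ) 1)
    (hrec : ∀ k, ∀ᵐ ω ∂μ, (μ[y (k + 1)|ℱ k]) ω ≤ (1 - a k ω) * y k ω + b k ω) (n : ℕ) :
    ∀ᵐ ω ∂μ, ∃ c, Tendsto (fun k => polyakStopped y
      (fun k ω => (n : ℝ) - ∑ j ∈ Finset.range k, b j ω)
      (fun k => {ω | ∀ j ≤ k, ∑ i ∈ Finset.range (j + 1), b i ω ≤ (n : ℝ)}) k ω)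
      atTop (nhds c) := by
  set h : ℕ → Ω → ℝ := fun k ω => (n : ℝ) - ∑ j ∈ Finset.range k, b j ω with hh_def
  set D : ℕ → Set Ω := fun k => {ω | ∀ j ≤ k, ∑ i ∈ Finset.range (j + 1), b i ω ≤ (n : ℝ)}
    with hD_def
  have hS_meas : ∀ j k, j ≤ k + 1 → StronglyMeasurable[ℱ k]
      (fun ω => ∑ i ∈ Finset.range j, b i ω) := fun j k hj =>
    Finset.stronglyMeasurable_fun_sum _ fun i hi =>
      (hb_adapted i).stronglyMeasurable.mono (ℱ.mono (by have := Finset.mem_range.mp hi; omega))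
  have hD_meas : ∀ k, MeasurableSet[ℱ k] (D k) := by
    intro k
    have : D k = ⋂ j ∈ Set.Iic k, {ω | ∑ i ∈ Finset.range (j + 1), b i ω ≤ (n : ℝ)} := by
      ext ω; simp [hD_def, Set.mem_iInter]
    rw [this]
    exact MeasurableSet.biInter (Set.to_countable _) fun j hj =>
      measurableSet_le (hS_meas (j + 1) k (by simpa using hj)).measurable measurable_const
  refine polyak_core ℱ y h D hy_adapted hy_int ?_ ?_ ?_ hD_meas ?_ ?_ ?_ ?_ ?_
  · -- h 0 strongly measurable
    have : h 0 = fun _ => (n : ℝ) := by funext ω; simp [hh_def]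
    rw [this]; exact stronglyMeasurable_const
  · have : h 0 = fun _ => (n : ℝ) := by funext ω; simp [hh_def]
    rw [this]; exact integrable_const _
  · exact fun k => stronglyMeasurable_const.sub (hS_meas (k + 1) k le_rfl)
  · -- monotone
    intro k ω hω j hj
    exact hω j (hj.trans k.le_succ)
  · -- integrability of the stopped h
    intro k
    refine Integrable.mono' (integrable_const ((n : ℝ))) ?_ ?_
    · exact (((stronglyMeasurable_const.sub (hS_meas (k + 1) k le_rfl)).indicator
        (hD_meas k)).mono (ℱ.le k)).aestronglyMeasurable
    · filter_upwards [ae_all_iff.2 hb_nonneg] with ω hb0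
      by_cases hm : ω ∈ D k
      · rw [Set.indicator_of_mem hm]
        have h1 : ∑ i ∈ Finset.range (k + 1), b i ω ≤ (n : ℝ) := hm k le_rfl
        have h2 : (0 : ℝ) ≤ ∑ i ∈ Finset.range (k + 1), b i ω :=
          Finset.sum_nonneg fun i _ => hb0 i
        rw [Real.norm_eq_abs, abs_le]
        constructor <;> simp [hh_def] <;> linarith
      · rw [Set.indicator_of_notMem hm]; simp
  · -- supermartingale inequality
    intro k
    filter_upwards [hrec k, hy_nonneg k, ha_mem k] with ω h1 h2 h3 _
    have hS : ∑ j ∈ Finset.range (k + 1), b j ω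
        = ∑ j ∈ Finset.range k, b j ω + b k ω := Finset.sum_range_succ _ _
    have hay : 0 ≤ a k ω * y k ω := mul_nonneg h3.1 h2
    have hexp : (1 - a k ω) * y k ω = y k ω - a k ω * y k ω := by ring
    simp only [hh_def]
    rw [hS]
    linarith
  · filter_upwards [hy_nonneg 0] with ω h
    simp only [Pi.zero_apply] at h
    have hn : (0:ℝ) ≤ (n:ℝ) := Nat.cast_nonneg n
    simp only [hh_def, Finset.range_zero, Finset.sum_empty, sub_zero]
    linarith
  · intro k
    filter_upwards [hy_nonneg (k + 1)] with ω h hm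
    simp only [Pi.zero_apply] at h
    have h1 : ∑ i ∈ Finset.range (k + 1), b i ω ≤ (n : ℝ) := hm k le_rfl
    simp only [hh_def]
    linarith
end

lemma polyak_conv2
    {Ω : Type*} {m : MeasurableSpace Ω} {μ : Measure Ω} [IsProbabilityMeasure μ]
    (ℱ : Filtration ℕ m) (y a b : ℕ → Ω → ℝ)
    (hy_adapted : Adapted ℱ y) (ha_adapted : Adapted ℱ a) (hb_adapted : Adapted ℱ b)
    (hy_int : ∀ k, Integrable (y k) μ)
    (hy_nonneg : ∀ k, 0 ≤ᵐ[μ] y k) (hb_nonneg : ∀ k, 0 ≤ᵐ[μ] b k)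
    (ha_mem : ∀ k, ∀ᵐ ω ∂μ, a k ω ∈ Set.Icc (0 : ℝ) 1)
    (hrec : ∀ k, ∀ᵐ ω ∂μ, (μ[y (k + 1)|ℱ k]) ω ≤ (1 - a k ω) * y k ω + b k ω)
    (n N mm : ℕ) :
    ∀ᵐ ω ∂μ, ∃ c, Tendsto (fun k => polyakStopped y
      (fun k ω => (n : ℝ) - ∑ j ∈ Finset.range k, b j ω
        + (1 / (mm + 1) : ℝ) * ∑ j ∈ Finset.Ico N k, a j ω)
      (fun k => {ω | ∀ j ≤ k, ∑ i ∈ Finset.range (j + 1), b i ω ≤ (n : ℝ)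
        ∧ (j < N ∨ (1 / (mm + 1) : ℝ) < y j ω)}) k ω)
      atTop (nhds c) := by
  set ε : ℝ := (1 / (mm + 1) : ℝ) with hε_def
  have hε_pos : 0 < ε := by positivity
  have hε_le : ε ≤ 1 := by
    rw [hε_def, div_le_one (by positivity)]
    have : (0:ℝ) ≤ (mm:ℝ) := Nat.cast_nonneg mm
    linarith
  set h : ℕ → Ω → ℝ := fun k ω => (n : ℝ) - ∑ j ∈ Finset.range k, b j ω
      + ε * ∑ j ∈ Finset.Ico N k, a j ω with hh_def
  set D : ℕ → Set Ω := fun k => {ω | ∀ j ≤ k, ∑ i ∈ Finset.range (j + 1), b i ω ≤ (n : ℝ)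
      ∧ (j < N ∨ ε < y j ω)} with hD_def
  have hS_meas : ∀ j k, j ≤ k + 1 → StronglyMeasurable[ℱ k]
      (fun ω => ∑ i ∈ Finset.range j, b i ω) := fun j k hj =>
    Finset.stronglyMeasurable_fun_sum _ fun i hi =>
      (hb_adapted i).stronglyMeasurable.mono (ℱ.mono (by have := Finset.mem_range.mp hi; omega))
  have hA_meas : ∀ k, StronglyMeasurable[ℱ k]
      (fun ω => ∑ j ∈ Finset.Ico N (k + 1), a j ω) := fun k =>
    Finset.stronglyMeasurable_fun_sum _ fun i hi =>
      (ha_adapted i).stronglyMeasurable.mono (ℱ.mono (by have := (Finset.mem_Ico.mp hi).2; omega))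
  have hD_meas : ∀ k, MeasurableSet[ℱ k] (D k) := by
    intro k
    have : D k = ⋂ j ∈ Set.Iic k, ({ω | ∑ i ∈ Finset.range (j + 1), b i ω ≤ (n : ℝ)}
        ∩ {ω | j < N ∨ ε < y j ω}) := by
      ext ω; simp [hD_def, Set.mem_iInter, Set.mem_inter_iff]
    rw [this]
    refine MeasurableSet.biInter (Set.to_countable _) fun j hj => MeasurableSet.inter
      (measurableSet_le (hS_meas (j + 1) k (by simpa using hj)).measurable measurable_const) ?_
    by_cases hjN : j < N
    · have : {ω : Ω | j < N ∨ ε < y j ω} = Set.univ := by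
        ext ω; simp [hjN]
      rw [this]; exact MeasurableSet.univ
    · have : {ω : Ω | j < N ∨ ε < y j ω} = {ω | ε < y j ω} := by
        ext ω; simp [hjN]
      rw [this]
      exact measurableSet_lt measurable_const
        (((hy_adapted j).stronglyMeasurable.mono (ℱ.mono (by simpa using hj))).measurable)
  refine polyak_core ℱ y h D hy_adapted hy_int ?_ ?_ ?_ hD_meas ?_ ?_ ?_ ?_ ?_
  · have : h 0 = fun _ => (n : ℝ) := by funext ω; simp [hh_def]
    rw [this]; exact stronglyMeasurable_const
  · have : h 0 = fun _ => (n : ℝ) := by funext ω; simp [hh_def]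
    rw [this]; exact integrable_const _
  · intro k
    exact (stronglyMeasurable_const.sub (hS_meas (k + 1) k le_rfl)).add
      (stronglyMeasurable_const.mul (hA_meas k))
  · intro k ω hω j hj
    exact hω j (hj.trans k.le_succ)
  · -- integrability of the stopped h
    intro k
    refine Integrable.mono' (integrable_const ((n : ℝ) + (k + 1))) ?_ ?_
    · refine ((((stronglyMeasurable_const.sub (hS_meas (k + 1) k le_rfl)).add
        (stronglyMeasurable_const.mul (hA_meas k))).indicator
        (hD_meas k)).mono (ℱ.le k)).aestronglyMeasurable
    · filter_upwards [ae_all_iff.2 hb_nonneg, ae_all_iff.2 ha_mem] with ω hb0 ha01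
      by_cases hm : ω ∈ D k
      · rw [Set.indicator_of_mem hm]
        have h1 : ∑ i ∈ Finset.range (k + 1), b i ω ≤ (n : ℝ) := (hm k le_rfl).1
        have h2 : (0 : ℝ) ≤ ∑ i ∈ Finset.range (k + 1), b i ω :=
          Finset.sum_nonneg fun i _ => hb0 i
        have h3 : (0 : ℝ) ≤ ∑ j ∈ Finset.Ico N (k + 1), a j ω :=
          Finset.sum_nonneg fun i _ => (ha01 i).1
        have h4 : ∑ j ∈ Finset.Ico N (k + 1), a j ω ≤ (k + 1 : ℝ) := by
          calc ∑ j ∈ Finset.Ico N (k + 1), a j ω ≤ ∑ j ∈ Finset.Ico N (k + 1), 1 :=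
                Finset.sum_le_sum fun i _ => (ha01 i).2
            _ = ((k + 1 - N : ℕ) : ℝ) := by simp [Nat.card_Ico]
            _ ≤ ((k + 1 : ℕ) : ℝ) := by exact_mod_cast Nat.cast_le.2 (Nat.sub_le _ _)
            _ = (k + 1 : ℝ) := by push_cast; ring
        have h5 : ε * ∑ j ∈ Finset.Ico N (k + 1), a j ω ≤ (k + 1 : ℝ) := by
          calc ε * ∑ j ∈ Finset.Ico N (k + 1), a j ω
              ≤ 1 * ∑ j ∈ Finset.Ico N (k + 1), a j ω :=
                mul_le_mul_of_nonneg_right hε_le h3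
            _ = ∑ j ∈ Finset.Ico N (k + 1), a j ω := one_mul _
            _ ≤ (k + 1 : ℝ) := h4
        have h6 : 0 ≤ ε * ∑ j ∈ Finset.Ico N (k + 1), a j ω := mul_nonneg hε_pos.le h3
        rw [Real.norm_eq_abs, abs_le]
        constructor <;> simp only [hh_def] <;> linarith
      · rw [Set.indicator_of_notMem hm]; simp; positivity
  · -- supermartingale inequality
    intro k
    filter_upwards [hrec k, hy_nonneg k, ha_mem k] with ω h1 h2 h3 hm
    simp only [Pi.zero_apply] at h2
    have hS : ∑ j ∈ Finset.range (k + 1), b j ω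
        = ∑ j ∈ Finset.range k, b j ω + b k ω := Finset.sum_range_succ _ _
    have hay : 0 ≤ a k ω * y k ω := mul_nonneg h3.1 h2
    have hexp : (1 - a k ω) * y k ω = y k ω - a k ω * y k ω := by ring
    simp only [hh_def]
    rw [hS]
    rcases lt_or_ge k N with hkN | hkN
    · have hIco1 : Finset.Ico N (k + 1) = ∅ := Finset.Ico_eq_empty (by omega)
      have hIco2 : Finset.Ico N k = ∅ := Finset.Ico_eq_empty (by omega)
      rw [hIco1, hIco2]
      simp only [Finset.sum_empty, mul_zero]
      linarith
    · have hIco : ∑ j ∈ Finset.Ico N (k + 1), a j ω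
          = ∑ j ∈ Finset.Ico N k, a j ω + a k ω := Finset.sum_Ico_succ_top hkN _
      have hεy : ε < y k ω := by
        rcases (hm k le_rfl).2 with h | h
        · omega
        · exact h
      have hmul : a k ω * ε ≤ a k ω * y k ω := mul_le_mul_of_nonneg_left hεy.le h3.1
      rw [hIco]
      nlinarith
  · filter_upwards [hy_nonneg 0] with ω h
    simp only [Pi.zero_apply] at h
    have hn : (0:ℝ) ≤ (n:ℝ) := Nat.cast_nonneg n
    simp only [hh_def, Finset.range_zero, Finset.sum_empty, sub_zero, Finset.Ico_eq_empty_iff]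
    have : Finset.Ico N 0 = ∅ := Finset.Ico_eq_empty (by omega)
    rw [this]
    simp only [Finset.sum_empty, mul_zero, add_zero]
    linarith
  · intro k
    filter_upwards [hy_nonneg (k + 1), ae_all_iff.2 ha_mem] with ω h ha01 hm
    simp only [Pi.zero_apply] at h
    have h1 : ∑ i ∈ Finset.range (k + 1), b i ω ≤ (n : ℝ) := (hm k le_rfl).1
    have h3 : (0 : ℝ) ≤ ∑ j ∈ Finset.Ico N (k + 1), a j ω :=
      Finset.sum_nonneg fun i _ => (ha01 i).1
    have h6 : 0 ≤ ε * ∑ j ∈ Finset.Ico N (k + 1), a j ω := mul_nonneg hε_pos.le h3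
    simp only [hh_def]
    linarith

/-- Theorem 2.2 (Polyak): if nonnegative adapted sequences satisfy
`E[y_{k+1} | F_k] ≤ (1 - a_k) y_k + b_k` with a.s. `a_k ∈ [0,1]`, `Σ a_k = ∞`,
`Σ b_k < ∞` and `b_k / a_k → 0`, then a.s. `y_k → 0`. -/
theorem polyak_convergence_to_zero
    {Ω : Type*} {m : MeasurableSpace Ω} {μ : Measure Ω} [IsProbabilityMeasure μ]
    (ℱ : Filtration ℕ m)
    (y a b : ℕ → Ω → ℝ)
    (hy_adapted : Adapted ℱ y) (ha_adapted : Adapted ℱ a) (hb_adapted : Adapted ℱ b)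
    (hy_int : ∀ k, Integrable (y k) μ)
    (hy_nonneg : ∀ k, 0 ≤ᵐ[μ] y k) (hb_nonneg : ∀ k, 0 ≤ᵐ[μ] b k)
    (ha_mem : ∀ k, ∀ᵐ ω ∂μ, a k ω ∈ Set.Icc (0 : ℝ) 1)
    (ha_div : ∀ᵐ ω ∂μ, ¬ Summable fun k => a k ω)
    (hb_sum : ∀ᵐ ω ∂μ, Summable fun k => b k ω)
    (hba : ∀ᵐ ω ∂μ, Tendsto (fun k => b k ω / a k ω) atTop (nhds 0))
    (hrec : ∀ k, ∀ᵐ ω ∂μ, (μ[y (k + 1)|ℱ k]) ω ≤ (1 - a k ω) * y k ω + b k ω) :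
    ∀ᵐ ω ∂μ, Tendsto (fun k => y k ω) atTop (nhds 0) := by
  have hc1 := fun n => polyak_conv1 ℱ y a b hy_adapted hb_adapted hy_int hy_nonneg
    hb_nonneg ha_mem hrec n
  have hc2 := fun n N mm => polyak_conv2 ℱ y a b hy_adapted ha_adapted hb_adapted hy_int
    hy_nonneg hb_nonneg ha_mem hrec n N mm
  filter_upwards [ha_div, hb_sum, ae_all_iff.2 hy_nonneg, ae_all_iff.2 hb_nonneg,
    ae_all_iff.2 ha_mem, ae_all_iff.2 hc1,
    ae_all_iff.2 fun n => ae_all_iff.2 fun N => ae_all_iff.2 fun mm => hc2 n N mm]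
    with ω hdiv hsum hy0 hb0 ha01 hV1 hV2
  simp only [Pi.zero_apply] at hy0 hb0
  -- partial sums of b are bounded by the total sum
  set T : ℝ := ∑' j, b j ω with hT_def
  have hSle : ∀ k, ∑ j ∈ Finset.range k, b j ω ≤ T :=
    fun k => hsum.sum_le_tsum _ (fun i _ => hb0 i)
  set n0 : ℕ := ⌈T⌉₊ with hn0_def
  have hTn0 : T ≤ (n0 : ℝ) := Nat.le_ceil T
  have hSbtend : Tendsto (fun k => ∑ j ∈ Finset.range k, b j ω) atTop (nhds T) :=
    hsum.hasSum.tendsto_sum_nat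
  -- ω never leaves the continuation region of the first stopped process
  have hmemD1 : ∀ k, ω ∈ {ω : Ω | ∀ j ≤ k,
      ∑ i ∈ Finset.range (j + 1), b i ω ≤ (n0 : ℝ)} :=
    fun k j _ => (hSle (j + 1)).trans hTn0
  obtain ⟨c, hc⟩ := hV1 n0
  have hVeq : ∀ k, polyakStopped y
      (fun k ω => (n0 : ℝ) - ∑ j ∈ Finset.range k, b j ω)
      (fun k => {ω | ∀ j ≤ k, ∑ i ∈ Finset.range (j + 1), b i ω ≤ (n0 : ℝ)}) k ω
      = y k ω + ((n0 : ℝ) - ∑ j ∈ Finset.range k, b j ω) := by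
    intro k
    cases k with
    | zero => rfl
    | succ k => exact polyakStopped_pos _ _ _ (hmemD1 k)
  -- `y` converges to `L`
  have hytend : Tendsto (fun k => y k ω) atTop (nhds (c - ((n0 : ℝ) - T))) := by
    have h1 := hc.sub ((tendsto_const_nhds :
      Tendsto (fun _ : ℕ => (n0 : ℝ)) atTop (nhds (n0 : ℝ))).sub hSbtend)
    exact Tendsto.congr (fun k => by rw [hVeq k]; ring) h1
  set L : ℝ := c - ((n0 : ℝ) - T) with hL_def
  have hL0 : 0 ≤ L := ge_of_tendsto' hytend fun k => hy0 k
  -- `L ≤ 1 / (mm + 1)` for every `mm`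
  have hclaim : ∀ mm : ℕ, L ≤ (1 / (mm + 1) : ℝ) := by
    intro mm
    by_contra hlt
    push_neg at hlt
    obtain ⟨N, hN⟩ := (eventually_atTop.mp (hytend.eventually (eventually_gt_nhds hlt)))
    obtain ⟨c2, hc2t⟩ := hV2 n0 N mm
    set ε : ℝ := (1 / (mm + 1) : ℝ) with hε_def
    have hε_pos : 0 < ε := by positivity
    have hmemD2 : ∀ k, ω ∈ {ω : Ω | ∀ j ≤ k,
        ∑ i ∈ Finset.range (j + 1), b i ω ≤ (n0 : ℝ) ∧ (j < N ∨ ε < y j ω)} := by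
      intro k j _
      refine ⟨(hSle (j + 1)).trans hTn0, ?_⟩
      rcases lt_or_ge j N with hj | hj
      · exact Or.inl hj
      · exact Or.inr (hN j hj)
    have hV2eq : ∀ k, polyakStopped y
        (fun k ω => (n0 : ℝ) - ∑ j ∈ Finset.range k, b j ω
          + ε * ∑ j ∈ Finset.Ico N k, a j ω)
        (fun k => {ω | ∀ j ≤ k, ∑ i ∈ Finset.range (j + 1), b i ω ≤ (n0 : ℝ)
          ∧ (j < N ∨ ε < y j ω)}) k ω
        = y k ω + ((n0 : ℝ) - ∑ j ∈ Finset.range k, b j ω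
          + ε * ∑ j ∈ Finset.Ico N k, a j ω) := by
      intro k
      cases k with
      | zero => rfl
      | succ k => exact polyakStopped_pos _ _ _ (hmemD2 k)
    -- the sequence V2 + Sb is bounded above
    obtain ⟨B, hB⟩ := (hc2t.add hSbtend).bddAbove_range
    have hBk : ∀ k, ε * ∑ j ∈ Finset.Ico N k, a j ω ≤ B := by
      intro k
      have h1 := hB (Set.mem_range_self k)
      rw [hV2eq k] at h1
      have h2 : (0:ℝ) ≤ (n0 : ℝ) := Nat.cast_nonneg n0
      have := hy0 k
      linarith
    -- partial sums of a are bounded, hence a is summable: contradiction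
    have hbound : ∀ k, ∑ j ∈ Finset.range k, a j ω
        ≤ ∑ j ∈ Finset.range N, a j ω + B * (mm + 1) := by
      intro k
      have hBpos : 0 ≤ B := by
        have h1 := hBk N
        simp only [Finset.Ico_self, Finset.sum_empty, mul_zero] at h1
        exact h1
      rcases le_or_gt N k with hNk | hNk
      · rw [← Finset.sum_range_add_sum_Ico _ hNk]
        have h1 : ∑ j ∈ Finset.Ico N k, a j ω ≤ B * (mm + 1) := by
          have h2 := hBk k
          have h3 : (0:ℝ) < (mm : ℝ) + 1 := by positivity
          have h4 : ∑ j ∈ Finset.Ico N k, a j ω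
              = (ε * ∑ j ∈ Finset.Ico N k, a j ω) * ((mm : ℝ) + 1) := by
            rw [hε_def]; field_simp
          rw [h4]
          exact mul_le_mul_of_nonneg_right h2 h3.le
        linarith
      · have h1 : ∑ j ∈ Finset.range k, a j ω ≤ ∑ j ∈ Finset.range N, a j ω :=
          Finset.sum_le_sum_of_subset_of_nonneg (Finset.range_subset_range.2 hNk.le)
            (fun i _ _ => (ha01 i).1)
        nlinarith [mul_nonneg hBpos (by positivity : (0:ℝ) ≤ (mm:ℝ)+1)]
    exact hdiv (summable_of_sum_range_le (fun j => (ha01 j).1) hbound)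
  -- conclude `L = 0`
  have hLle : L ≤ 0 := by
    refine ge_of_tendsto' tendsto_one_div_add_atTop_nhds_zero_nat fun mm => ?_
    exact hclaim mm
  have hL : L = 0 := le_antisymm hLle hL0
  rw [hL] at hytend
  exact hytend
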